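/- Let k, t ≥ 2 and 1 ≤ r ≤ t be integers. For every complex number q with |q| < 1, the identity Σ_{n=0}^∞ D_k(r,t;n)·q^n = ξ_k(q) · Σ_{m ≥ 1, m ≡ r (mod t)} ( q^m/(1 − q^m) − k·q^{km}/(1 − q^{km}) ) holds, with all series converging absolutely. -/

import Mathlib

open Real

/-- The number of parts congruent to `r` modulo `t` among all `k`-regular
partitions of `n` (partitions where every part has multiplicity less than `k`). -/
def Dk (k r t n : ℕ) : ℕ :=
  ∑ p ∈ Finset.univ.filter
      (fun p : Nat.Partition n => ∀ i ∈ p.parts, p.parts.count i < k),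
    Multiset.card (p.parts.filter (fun j => j % t = r % t))

/-- The generating function of `k`-regular partitions,
`ξ_k(q) = ∏_{n ≥ 1} (1 - q^{kn})/(1 - q^n)`. -/
noncomputable def xi (k : ℕ) (q : ℂ) : ℂ :=
  ∏' n : ℕ, (1 - q ^ (k * (n + 1))) / (1 - q ^ (n + 1))

namespace Stmt6Aux

open Finset

/-- weight of a finitely supported multiplicity function -/
def wgt (f : ℕ →₀ ℕ) : ℕ := f.sum fun i j => i * j

/-- the set of `k`-regular multiplicity functions with support inside `S` -/
def Reg (k : ℕ) (S : Set ℕ) : Set (ℕ →₀ ℕ) :=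
  {f | (∀ i, f i < k) ∧ f 0 = 0 ∧ ∀ i ∈ f.support, i ∈ S}

/-- the set of positive naturals -/
def Pos : Set ℕ := {i | 0 < i}

lemma reg_mono {k : ℕ} {S T : Set ℕ} (h : S ⊆ T) : Reg k S ⊆ Reg k T :=
  fun f hf => ⟨hf.1, hf.2.1, fun i hi => h (hf.2.2 i hi)⟩

lemma wgt_add (f g : ℕ →₀ ℕ) : wgt (f + g) = wgt f + wgt g := by
  classical
  exact Finsupp.sum_add_index' (fun i => mul_zero i) (fun i a b => mul_add i a b)

lemma wgt_single (m j : ℕ) : wgt (Finsupp.single m j) = m * j := by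
  classical
  simp [wgt, Finsupp.sum_single_index]

lemma wgt_eq_sum {f : ℕ →₀ ℕ} {s : Finset ℕ} (hs : f.support ⊆ s) :
    wgt f = ∑ i ∈ s, i * f i := by
  classical
  rw [wgt, Finsupp.sum]
  exact Finset.sum_subset hs (by intro x _ hx
                                 simp [Finsupp.notMem_support_iff.mp hx])

lemma mul_apply_le_wgt (f : ℕ →₀ ℕ) (m : ℕ) : m * f m ≤ wgt f := by
  classical
  by_cases h : f m = 0
  · simp [h]
  · exact Finset.single_le_sum (f := fun i => i * f i) (fun i _ => Nat.zero_le _)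
      (Finsupp.mem_support_iff.mpr h)

lemma apply_le_wgt {f : ℕ →₀ ℕ} {m : ℕ} (hm : 0 < m) : f m ≤ wgt f :=
  le_trans (Nat.le_mul_of_pos_left _ hm) (mul_apply_le_wgt f m)

lemma apply_eq_zero_of_not_mem {k : ℕ} {S : Set ℕ} {f : ℕ →₀ ℕ} (hf : f ∈ Reg k S)
    {m : ℕ} (hm : m ∉ S) : f m = 0 := by
  by_contra h
  exact hm (hf.2.2 m (Finsupp.mem_support_iff.mpr h))

/-- finite partial-sum bound -/
lemma sum_le_bound (k : ℕ) {x : ℝ} (hx0 : 0 ≤ x) (hx1 : x < 1)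
    (s : Finset (ℕ →₀ ℕ)) (hs : ∀ f ∈ s, f ∈ Reg k Pos) :
    ∑ f ∈ s, x ^ wgt f ≤ Real.exp (k * (1 - x)⁻¹) := by
  classical
  set N := s.sup (fun f => f.support.sup id) with hN
  set t := Finset.range (N + 1) with ht
  have hsupp : ∀ f ∈ s, f.support ⊆ t := by
    intro f hf i hi
    have h1 : i ≤ f.support.sup id := Finset.le_sup (f := id) hi
    have h2 : f.support.sup id ≤ N := Finset.le_sup (f := fun f => f.support.sup id) hf
    exact Finset.mem_range.mpr (by omega)
  have hterm : ∀ f ∈ s, x ^ wgt f = ∏ n ∈ t.attach, x ^ (n.1 * f n.1) := by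
    intro f hf
    rw [wgt_eq_sum (hsupp f hf), ← Finset.prod_pow_eq_pow_sum, ← Finset.prod_attach t
      (fun n => x ^ (n * f n))]
  rw [Finset.sum_congr rfl hterm]
  have key : ∑ f ∈ s, ∏ n ∈ t.attach, x ^ (n.1 * f n.1)
      ≤ ∏ n ∈ t, ∑ j ∈ range k, x ^ (n * j) := by
    rw [Finset.prod_sum]
    set e : (ℕ →₀ ℕ) → ((n : ℕ) → n ∈ t → ℕ) := fun f => fun n _ => f n with he
    have hinj : Set.InjOn e s := by
      intro f hf g hg h
      ext i
      by_cases hit : i ∈ t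
      · exact congrFun (congrFun h i) hit
      · rw [Finsupp.notMem_support_iff.mp (fun hc => hit ((hsupp f hf) hc)),
          Finsupp.notMem_support_iff.mp (fun hc => hit ((hsupp g hg) hc))]
    calc ∑ f ∈ s, ∏ n ∈ t.attach, x ^ (n.1 * f n.1)
        = ∑ g ∈ s.image e, ∏ n ∈ t.attach, x ^ (n.1 * g n.1 n.2) := by
          rw [Finset.sum_image (fun f hf g hg h => hinj hf hg h)]
      _ ≤ ∑ g ∈ t.pi (fun _ => range k), ∏ n ∈ t.attach, x ^ (n.1 * g n.1 n.2) := by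
          apply Finset.sum_le_sum_of_subset_of_nonneg
          · intro g hg
            obtain ⟨f, hf, rfl⟩ := Finset.mem_image.mp hg
            exact Finset.mem_pi.mpr (fun n _ => Finset.mem_range.mpr ((hs f hf).1 n))
          · intro g _ _
            positivity
  refine key.trans ?_
  have hfac : ∀ n ∈ t, ∑ j ∈ range k, x ^ (n * j) ≤ Real.exp (k * x ^ n) := by
    intro n _
    have hb : ∑ j ∈ range k, x ^ (n * j) ≤ 1 + k * x ^ n := by
      cases k with
      | zero =>
        simp only [Finset.range_zero, Finset.sum_empty, Nat.cast_zero, zero_mul, add_zero]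
        exact zero_le_one
      | succ K =>
        rw [Finset.sum_range_succ']
        have hle : ∀ j ∈ range K, x ^ (n * (j + 1)) ≤ x ^ n := fun j _ =>
          pow_le_pow_of_le_one hx0 hx1.le (Nat.le_mul_of_pos_right n (Nat.succ_pos j))
        have h1 : (∑ j ∈ range K, x ^ (n * (j + 1))) ≤ K * x ^ n := by
          calc (∑ j ∈ range K, x ^ (n * (j + 1))) ≤ ∑ _j ∈ range K, x ^ n :=
              Finset.sum_le_sum hle
            _ = K * x ^ n := by rw [Finset.sum_const, Finset.card_range, nsmul_eq_mul]
        have h2 : x ^ (n * 0) = 1 := by rw [mul_zero, pow_zero]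
        have h3 : (0:ℝ) ≤ x ^ n := pow_nonneg hx0 n
        push_cast
        nlinarith [h1, h2, h3]
    refine hb.trans ?_
    have := Real.add_one_le_exp (k * x ^ n)
    linarith
  calc ∏ n ∈ t, ∑ j ∈ range k, x ^ (n * j)
      ≤ ∏ n ∈ t, Real.exp (k * x ^ n) := by
        apply Finset.prod_le_prod
        · intro n _
          positivity
        · exact hfac
    _ = Real.exp (∑ n ∈ t, k * x ^ n) := by rw [Real.exp_sum]
    _ ≤ Real.exp (k * (1 - x)⁻¹) := by
        apply Real.exp_le_exp.mpr
        rw [← Finset.mul_sum]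
        have hgeo : ∑ n ∈ t, x ^ n ≤ (1 - x)⁻¹ := by
          rw [← tsum_geometric_of_lt_one hx0 hx1]
          exact (summable_geometric_of_lt_one hx0 hx1).sum_le_tsum t (fun i _ => by positivity)
        have : (0:ℝ) ≤ (k:ℝ) := Nat.cast_nonneg k
        exact mul_le_mul_of_nonneg_left hgeo this

lemma summable_master (k : ℕ) {x : ℝ} (hx0 : 0 ≤ x) (hx1 : x < 1) :
    Summable ((Reg k Pos).indicator fun f => x ^ wgt f) := by
  classical
  apply summable_of_sum_le (c := Real.exp (k * (1 - x)⁻¹))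
  · intro f
    exact Set.indicator_nonneg (fun g _ => by positivity) f
  · intro u
    rw [Finset.sum_indicator_eq_sum_filter]
    exact sum_le_bound k hx0 hx1 _ (fun f hf => (Finset.mem_filter.mp hf).2)

lemma summable_master' (k : ℕ) {x : ℝ} (hx0 : 0 ≤ x) (hx1 : x < 1) :
    Summable ((Reg k Pos).indicator fun f => (wgt f + 1) * x ^ wgt f) := by
  classical
  set y : ℝ := (1 + x) / 2 with hy
  have hy0 : 0 ≤ y := by positivity
  have hy1 : y < 1 := by rw [hy]; linarith
  have hypos : 0 < y := by rw [hy]; linarith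
  have hxy : x / y < 1 := (div_lt_one hypos).mpr (by rw [hy]; linarith)
  have hxy0 : 0 ≤ x / y := by positivity
  have hsum : Summable (fun n : ℕ => ((n : ℝ) + 1) * (x / y) ^ n) := by
    have h1 : Summable (fun n : ℕ => (n : ℝ) ^ 1 * (x / y) ^ n) :=
      summable_pow_mul_geometric_of_norm_lt_one 1 (by rwa [Real.norm_eq_abs, abs_of_nonneg hxy0])
    have h2 : Summable (fun n : ℕ => (x / y) ^ n) := summable_geometric_of_lt_one hxy0 hxy
    simpa [add_mul, one_mul, pow_one] using h1.add h2
  set C : ℝ := ∑' n : ℕ, ((n : ℝ) + 1) * (x / y) ^ n with hC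
  have hCn : ∀ n : ℕ, ((n : ℝ) + 1) * (x / y) ^ n ≤ C :=
    fun n => hsum.le_tsum n (fun m _ => by positivity)
  refine Summable.of_nonneg_of_le
    (fun f => Set.indicator_nonneg (fun g _ => by positivity) f)
    (fun f => ?_) ((summable_master k hy0 hy1).mul_left C)
  · by_cases hf : f ∈ Reg k Pos
    · rw [Set.indicator_of_mem hf, Set.indicator_of_mem hf]
      have h1 := hCn (wgt f)
      have h2 : ((wgt f : ℝ) + 1) * (x / y) ^ wgt f * y ^ wgt f ≤ C * y ^ wgt f :=
        mul_le_mul_of_nonneg_right h1 (by positivity)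
      calc ((wgt f : ℝ) + 1) * x ^ wgt f
          = ((wgt f : ℝ) + 1) * (x / y) ^ wgt f * y ^ wgt f := by
            rw [mul_assoc, ← mul_pow, div_mul_cancel₀ _ hypos.ne']
        _ ≤ C * y ^ wgt f := h2
    · rw [Set.indicator_of_notMem hf, Set.indicator_of_notMem hf, mul_zero]

/-- summability of any dominated family on a regular set -/
lemma summable_on {k : ℕ} {q : ℂ} (hq : ‖q‖ < 1) {S : Set ℕ} (hS : S ⊆ Pos)
    {E : Type*} [NormedAddCommGroup E] [CompleteSpace E] {F : (ℕ →₀ ℕ) → E}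
    (hF : ∀ f ∈ Reg k S, ‖F f‖ ≤ (wgt f + 1) * ‖q‖ ^ wgt f) :
    Summable (fun f : ↥(Reg k S) => F f.1) := by
  apply Summable.of_norm
  have hmaster := (summable_master' k (norm_nonneg q) hq).subtype (Reg k S)
  apply Summable.of_nonneg_of_le (fun f => norm_nonneg _) _ hmaster
  intro f
  have hmem : f.1 ∈ Reg k Pos := reg_mono hS f.2
  have : ((Reg k Pos).indicator fun g => ((wgt g : ℝ) + 1) * ‖q‖ ^ wgt g) f.1
      = ((wgt f.1 : ℝ) + 1) * ‖q‖ ^ wgt f.1 := Set.indicator_of_mem hmem _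
  rw [Function.comp_apply, this]
  exact hF f.1 f.2

/-- the base sum over a regular set -/
noncomputable def TT (k : ℕ) (q : ℂ) (S : Set ℕ) : ℂ :=
  ∑' f : ↥(Reg k S), q ^ wgt f.1

lemma reg_empty_eq_zero {k : ℕ} (f : ↥(Reg k (∅ : Set ℕ))) : f.1 = 0 := by
  ext i
  by_contra h
  exact f.2.2.2 i (Finsupp.mem_support_iff.mpr h)

lemma TT_empty {k : ℕ} (hk : 2 ≤ k) (q : ℂ) : TT k q ∅ = 1 := by
  have h0 : (0 : ℕ →₀ ℕ) ∈ Reg k (∅ : Set ℕ) := by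
    refine ⟨fun i => ?_, rfl, fun i hi => by simp at hi⟩
    simp only [Finsupp.coe_zero, Pi.zero_apply]
    omega
  rw [TT, tsum_eq_single (⟨0, h0⟩ : ↥(Reg k (∅ : Set ℕ)))]
  · simp [wgt]
  · intro b hb
    exact absurd (Subtype.ext (reg_empty_eq_zero b)) hb

/-- the splitting equivalence -/
noncomputable def regEquiv (k : ℕ) {m : ℕ} (hm : 0 < m) {S : Set ℕ} (hmS : m ∉ S) :
    (Fin k × ↥(Reg k S)) ≃ ↥(Reg k (insert m S)) where
  toFun p := ⟨p.2.1 + Finsupp.single m p.1.1, by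
    obtain ⟨j, g⟩ := p
    refine ⟨fun i => ?_, ?_, fun i hi => ?_⟩
    · rcases eq_or_ne i m with rfl | hne
      · simpa [Finsupp.add_apply, apply_eq_zero_of_not_mem g.2 hmS] using j.2
      · simpa [Finsupp.add_apply, Finsupp.single_eq_of_ne' (Ne.symm hne)] using g.2.1 i
    · simp [Finsupp.add_apply, g.2.2.1, Finsupp.single_eq_of_ne' hm.ne']
    · rcases Finset.mem_union.mp (Finsupp.support_add hi) with h | h
      · exact Set.mem_insert_of_mem _ (g.2.2.2 i h)
      · have := Finsupp.support_single_subset h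
        simp only [Finset.mem_singleton] at this
        exact this ▸ Set.mem_insert _ _⟩
  invFun f := (⟨f.1 m, f.2.1 m⟩, ⟨f.1.erase m, by
    refine ⟨fun i => ?_, ?_, fun i hi => ?_⟩
    · rcases eq_or_ne i m with rfl | hne
      · simpa [Finsupp.erase_same] using Nat.lt_of_lt_of_le Nat.zero_lt_one
          (Nat.one_le_iff_ne_zero.mpr (by rintro rfl; exact absurd f.2.1 (by simp)))
      · rw [Finsupp.erase_ne hne]; exact f.2.1 i
    · rw [Finsupp.erase_ne hm.ne]; exact f.2.2.1
    · rw [Finsupp.support_erase, Finset.mem_erase] at hi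
      rcases Set.mem_insert_iff.mp (f.2.2.2 i hi.2) with h | h
      · exact absurd h hi.1
      · exact h⟩)
  left_inv p := by
    obtain ⟨j, g⟩ := p
    have hgm : g.1 m = 0 := apply_eq_zero_of_not_mem g.2 hmS
    refine Prod.ext ?_ (Subtype.ext ?_)
    · ext
      simp [Finsupp.add_apply, hgm, Finsupp.single_eq_same]
    · ext i
      rcases eq_or_ne i m with rfl | hne
      · simp [Finsupp.erase_same, hgm]
      · simp [Finsupp.erase_ne hne, Finsupp.add_apply, Finsupp.single_eq_of_ne' (Ne.symm hne)]
  right_inv f := by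
    refine Subtype.ext ?_
    ext i
    rcases eq_or_ne i m with rfl | hne
    · simp [Finsupp.add_apply, Finsupp.erase_same, Finsupp.single_eq_same]
    · simp [Finsupp.add_apply, Finsupp.erase_ne hne, Finsupp.single_eq_of_ne' (Ne.symm hne)]

lemma tsum_insert {k : ℕ} {q : ℂ} (hq : ‖q‖ < 1) {m : ℕ} (hm : 0 < m)
    {S : Set ℕ} (hS : S ⊆ Pos) (hmS : m ∉ S) (c : ℕ → ℂ)
    (hsum : Summable (fun f : ↥(Reg k (insert m S)) => c (f.1 m) * q ^ wgt f.1)) :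
    ∑' f : ↥(Reg k (insert m S)), c (f.1 m) * q ^ wgt f.1
      = (∑ j ∈ range k, c j * q ^ (m * j)) * TT k q S := by
  classical
  set e := regEquiv k hm hmS with he
  rw [← e.tsum_eq]
  have hval : ∀ p : Fin k × ↥(Reg k S),
      c ((e p).1 m) * q ^ wgt (e p).1 = (c p.1.1 * q ^ (m * p.1.1)) * q ^ wgt p.2.1 := by
    rintro ⟨j, g⟩
    have h1 : (e (j, g)).1 = g.1 + Finsupp.single m j.1 := rfl
    have hgm : g.1 m = 0 := apply_eq_zero_of_not_mem g.2 hmS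
    rw [h1, show (g.1 + Finsupp.single m j.1) m = j.1 by
      simp [Finsupp.add_apply, hgm]]
    rw [wgt_add, wgt_single, pow_add]
    ring
  rw [tsum_congr hval]
  have hsum2 : Summable (fun p : Fin k × ↥(Reg k S) =>
      (c p.1.1 * q ^ (m * p.1.1)) * q ^ wgt p.2.1) :=
    (((Equiv.summable_iff e).mpr hsum).congr hval)
  rw [hsum2.tsum_prod' hsum2.prod_factor, tsum_fintype]
  have hj : ∀ j : Fin k, (∑' g : ↥(Reg k S), (c j.1 * q ^ (m * j.1)) * q ^ wgt g.1)
      = (c j.1 * q ^ (m * j.1)) * TT k q S := fun j => tsum_mul_left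
  rw [Finset.sum_congr rfl (fun j _ => hj j), ← Finset.sum_mul]
  congr 1
  exact Fin.sum_univ_eq_sum_range (fun j => c j * q ^ (m * j)) k

lemma hc_one {k : ℕ} {q : ℂ} (hq : ‖q‖ < 1) {S : Set ℕ} (hS : S ⊆ Pos) :
    Summable (fun f : ↥(Reg k S) => (1 : ℂ) * q ^ wgt f.1) := by
  refine summable_on (k := k) hq hS (F := fun g => (1 : ℂ) * q ^ wgt g) (fun f _ => ?_)
  rw [one_mul, norm_pow]
  have h1 : ‖q‖ ^ wgt f ≤ 1 * ‖q‖ ^ wgt f := by rw [one_mul]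
  refine h1.trans ?_
  apply mul_le_mul_of_nonneg_right _ (by positivity)
  have : (0:ℝ) ≤ (wgt f : ℝ) := Nat.cast_nonneg _
  linarith

lemma hc_id {k : ℕ} {q : ℂ} (hq : ‖q‖ < 1) {S : Set ℕ} (hS : S ⊆ Pos) (m : ℕ) (hm : 0 < m) :
    Summable (fun f : ↥(Reg k S) => ((f.1 m : ℂ)) * q ^ wgt f.1) := by
  refine summable_on (k := k) hq hS (F := fun g => ((g m : ℂ)) * q ^ wgt g) (fun f hfm => ?_)
  rw [norm_mul, norm_pow, Complex.norm_natCast]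
  apply mul_le_mul_of_nonneg_right _ (by positivity)
  have h1 : f m ≤ wgt f := apply_le_wgt hm
  have : (f m : ℝ) ≤ (wgt f : ℝ) := Nat.cast_le.mpr h1
  linarith

lemma TT_insert {k : ℕ} {q : ℂ} (hq : ‖q‖ < 1) {m : ℕ} (hm : 0 < m)
    {S : Set ℕ} (hS : S ⊆ Pos) (hmS : m ∉ S) :
    TT k q (insert m S) = (∑ j ∈ range k, q ^ (m * j)) * TT k q S := by
  have hS' : insert m S ⊆ Pos := by
    intro i hi
    rcases Set.mem_insert_iff.mp hi with h | h
    · exact h ▸ hm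
    · exact hS h
  have h := tsum_insert (k := k) hq hm hS hmS (fun _ => (1 : ℂ)) (hc_one hq hS')
  simp only [one_mul] at h
  rw [TT, h]

lemma prod_eq_TT {k : ℕ} (hk : 2 ≤ k) {q : ℂ} (hq : ‖q‖ < 1) (s : Finset ℕ) :
    ∏ n ∈ s, (∑ j ∈ range k, q ^ ((n + 1) * j)) = TT k q ↑(s.image (· + 1)) := by
  classical
  induction s using Finset.induction_on with
  | empty => simpa using (TT_empty hk q).symm
  | @insert a s ha ih =>
    rw [Finset.prod_insert ha, ih, Finset.image_insert, Finset.coe_insert]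
    have hm : (0:ℕ) < a + 1 := Nat.succ_pos a
    have hnotmem : (a + 1) ∉ (↑(s.image (· + 1)) : Set ℕ) := by
      simp only [Finset.coe_image, Set.mem_image, Finset.mem_coe]
      rintro ⟨b, hb, hba⟩
      have : b = a := by omega
      exact ha (this ▸ hb)
    have hsub : (↑(s.image (· + 1)) : Set ℕ) ⊆ Pos := by
      intro i hi
      simp only [Finset.coe_image, Set.mem_image, Finset.mem_coe] at hi
      obtain ⟨b, _, rfl⟩ := hi
      exact Nat.succ_pos b
    rw [TT_insert hq hm hsub hnotmem]

lemma finite_wle (k : ℕ) (N : ℕ) : ({g : ↥(Reg k Pos) | wgt g.1 ≤ N}).Finite := by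
  classical
  rw [← Set.finite_coe_iff]
  let φ : ↥{g : ↥(Reg k Pos) | wgt g.1 ≤ N} → (Fin (N + 1) → Fin (k + 1)) :=
    fun g i => ⟨g.1.1 i.1, Nat.lt_succ_of_lt (g.1.2.1 i.1)⟩
  have hinj : Function.Injective φ := by
    intro a b h
    apply Subtype.ext
    apply Subtype.ext
    ext i
    by_cases hiN : i ≤ N
    · have := congrFun h ⟨i, Nat.lt_succ_of_le hiN⟩
      exact congrArg Fin.val this
    · -- both are zero
      have hz : ∀ c : ↥{g : ↥(Reg k Pos) | wgt g.1 ≤ N}, c.1.1 i = 0 := by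
        intro c
        by_contra hc
        have hmem : i ∈ c.1.1.support := Finsupp.mem_support_iff.mpr hc
        have hip : 0 < i := c.1.2.2.2 i hmem
        have h1 : i ≤ i * c.1.1 i := Nat.le_mul_of_pos_right i (Nat.pos_of_ne_zero hc)
        have h2 : i * c.1.1 i ≤ wgt c.1.1 := mul_apply_le_wgt c.1.1 i
        have h3 : wgt c.1.1 ≤ N := c.2
        omega
      rw [hz a, hz b]
  exact Finite.of_injective φ hinj

lemma hasProd_TT {k : ℕ} (hk : 2 ≤ k) {q : ℂ} (hq : ‖q‖ < 1) :
    HasProd (fun n : ℕ => ∑ j ∈ range k, q ^ ((n + 1) * j)) (TT k q Pos) := by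
  classical
  set F : ↥(Reg k Pos) → ℂ := fun g => q ^ wgt g.1 with hF
  set G : ↥(Reg k Pos) → ℝ := fun g => ‖q‖ ^ wgt g.1 with hG
  have hGs : Summable G :=
    ((summable_master k (norm_nonneg q) hq).subtype (Reg k Pos)).congr
      (fun g => Set.indicator_of_mem (s := Reg k Pos) g.2 _)
  have hFs : Summable F :=
    (hc_one (k := k) hq (subset_refl Pos)).congr (fun f => one_mul _)
  set u : ℕ → Finset ↥(Reg k Pos) := fun N => (finite_wle k N).toFinset with hu
  have hmemu : ∀ (N : ℕ) (g : ↥(Reg k Pos)), g ∈ u N ↔ wgt g.1 ≤ N := by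
    intro N g
    rw [hu]
    exact Set.Finite.mem_toFinset _
  have hut : Filter.Tendsto u Filter.atTop Filter.atTop := by
    rw [Filter.tendsto_atTop]
    intro b
    rw [Filter.eventually_atTop]
    refine ⟨b.sup (fun g => wgt g.1), fun N hN => ?_⟩
    rw [Finset.le_iff_subset]
    intro g hg
    exact (hmemu N g).mpr (le_trans (Finset.le_sup (f := fun g : ↥(Reg k Pos) => wgt g.1) hg) hN)
  have htail : Filter.Tendsto (fun N => ∑' x : {x : ↥(Reg k Pos) // x ∉ u N}, G x)
      Filter.atTop (nhds 0) :=
    (tendsto_tsum_compl_atTop_zero G).comp hut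
  have hdecomp : ∀ s : Finset ℕ,
      TT k q Pos - ∏ n ∈ s, (∑ j ∈ range k, q ^ ((n + 1) * j))
        = ∑' g : ↥({g : ↥(Reg k Pos) |
            ∀ i ∈ g.1.support, i ∈ (↑(s.image (· + 1)) : Set ℕ)}ᶜ), F g.1 := by
    intro s
    set V : Set ↥(Reg k Pos) := {g : ↥(Reg k Pos) |
        ∀ i ∈ g.1.support, i ∈ (↑(s.image (· + 1)) : Set ℕ)} with hV
    have h1 : (∑' g : ↥V, F g.1) + (∑' g : ↥(Vᶜ), F g.1) = TT k q Pos :=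
      (hFs.subtype V).tsum_add_tsum_compl (hFs.subtype Vᶜ)
    have hsub : (↑(s.image (· + 1)) : Set ℕ) ⊆ Pos := by
      intro i hi
      simp only [Finset.coe_image, Set.mem_image, Finset.mem_coe] at hi
      obtain ⟨b, _, rfl⟩ := hi
      exact Nat.succ_pos b
    have h2 : ∏ n ∈ s, (∑ j ∈ range k, q ^ ((n + 1) * j)) = ∑' g : ↥V, F g.1 := by
      rw [prod_eq_TT hk hq s, TT]
      let e : ↥(Reg k (↑(s.image (· + 1)) : Set ℕ)) ≃ ↥V :=
        { toFun := fun f => (⟨⟨f.1, reg_mono hsub f.2⟩, fun i hi => f.2.2.2 i hi⟩ : ↥V)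
          invFun := fun g => ⟨g.1.1, ⟨g.1.2.1, g.1.2.2.1, g.2⟩⟩
          left_inv := fun f => rfl
          right_inv := fun g => rfl }
      exact e.tsum_eq (fun g : ↥V => F g.1)
    rw [h2, ← h1]
    ring
  have hmain : Filter.Tendsto
      (fun s : Finset ℕ => ∏ n ∈ s, (∑ j ∈ range k, q ^ ((n + 1) * j)))
      Filter.atTop (nhds (TT k q Pos)) := by
    rw [Metric.tendsto_nhds]
    intro ε hε
    obtain ⟨N, hN⟩ := ((tendsto_order.1 htail).2 ε hε).exists
    rw [Filter.eventually_atTop]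
    refine ⟨Finset.range N, fun s hs => ?_⟩
    rw [dist_comm, dist_eq_norm, hdecomp s]
    set V : Set ↥(Reg k Pos) := {g : ↥(Reg k Pos) |
        ∀ i ∈ g.1.support, i ∈ (↑(s.image (· + 1)) : Set ℕ)} with hV
    have hnormsum : Summable (fun g : ↥(Vᶜ) => ‖F g.1‖) :=
      (hGs.subtype Vᶜ).congr (fun g => (norm_pow q (wgt g.1.1)).symm)
    calc ‖∑' g : ↥(Vᶜ), F g.1‖ ≤ ∑' g : ↥(Vᶜ), ‖F g.1‖ := norm_tsum_le_tsum_norm hnormsum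
      _ = ∑' g : ↥(Vᶜ), G g.1 := tsum_congr (fun g => norm_pow q (wgt g.1.1))
      _ ≤ ∑' x : {x : ↥(Reg k Pos) // x ∉ u N}, G x := by
          have hι : ∀ g : ↥(Vᶜ), g.1 ∉ u N := by
            intro g
            rw [hmemu]
            intro hle
            have hg2 := g.2
            simp only [hV, Set.mem_compl_iff, Set.mem_setOf_eq, not_forall] at hg2
            obtain ⟨i, hi, hins⟩ := hg2
            have hip : 0 < i := g.1.2.2.2 i hi
            have h1 : i ≤ i * g.1.1 i :=
              Nat.le_mul_of_pos_right i
                (Nat.pos_of_ne_zero (Finsupp.mem_support_iff.mp hi))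
            have h2 : i * g.1.1 i ≤ wgt g.1.1 := mul_apply_le_wgt g.1.1 i
            have hiN : i ≤ N := by omega
            apply hins
            simp only [Finset.coe_image, Set.mem_image, Finset.mem_coe]
            refine ⟨i - 1, hs (Finset.mem_range.mpr (by omega)), by omega⟩
          apply Summable.tsum_le_tsum_of_inj (fun g : ↥(Vᶜ) => (⟨g.1, hι g⟩ :
              {x : ↥(Reg k Pos) // x ∉ u N}))
          · intro a b h
            exact Subtype.ext (by simpa using h)
          · intro c _
            have : (0:ℝ) ≤ ‖q‖ ^ wgt c.1.1 := by positivity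
            exact this
          · intro g
            exact le_refl _
          · exact hGs.subtype Vᶜ
          · exact hGs.subtype _
      _ < ε := hN
  exact hmain

lemma xi_eq_TT {k : ℕ} (hk : 2 ≤ k) {q : ℂ} (hq : ‖q‖ < 1) : xi k q = TT k q Pos := by
  have hfac : ∀ n : ℕ, (1 - q ^ (k * (n + 1))) / (1 - q ^ (n + 1))
      = ∑ j ∈ range k, q ^ ((n + 1) * j) := by
    intro n
    have hx : ‖q ^ (n + 1)‖ < 1 := by
      rw [norm_pow]
      exact pow_lt_one₀ (norm_nonneg q) hq (Nat.succ_ne_zero n)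
    have hx1 : q ^ (n + 1) ≠ 1 := by
      intro h
      rw [h] at hx
      simp at hx
    have h2 : (q ^ (n + 1)) ^ k = q ^ (k * (n + 1)) := by rw [← pow_mul, mul_comm]
    calc (1 - q ^ (k * (n + 1))) / (1 - q ^ (n + 1))
        = ((q ^ (n + 1)) ^ k - 1) / ((q ^ (n + 1)) - 1) := by
          rw [h2, ← neg_div_neg_eq]
          congr 1 <;> ring
      _ = ∑ j ∈ range k, (q ^ (n + 1)) ^ j := (geom_sum_eq hx1 k).symm
      _ = ∑ j ∈ range k, q ^ ((n + 1) * j) := by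
          refine Finset.sum_congr rfl fun j _ => ?_
          rw [← pow_mul]
  rw [xi, tprod_congr hfac]
  exact (hasProd_TT hk hq).tprod_eq

/-- number of parts ≡ r mod t counted with multiplicity -/
def cnt (t r : ℕ) (f : ℕ →₀ ℕ) : ℕ :=
  ∑ i ∈ f.support.filter (fun i => i % t = r % t), f i

lemma cnt_le_wgt (t r : ℕ) {k : ℕ} {f : ℕ →₀ ℕ} (hf : f ∈ Reg k Pos) :
    cnt t r f ≤ wgt f := by
  classical
  calc cnt t r f ≤ ∑ i ∈ f.support.filter (fun i => i % t = r % t), i * f i := by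
        refine Finset.sum_le_sum fun i hi => ?_
        have hips : (0:ℕ) < i := hf.2.2 i (Finset.mem_filter.mp hi).1
        exact Nat.le_mul_of_pos_left _ hips
    _ ≤ ∑ i ∈ f.support, i * f i :=
        Finset.sum_le_sum_of_subset (Finset.filter_subset _ _)
    _ = wgt f := rfl

/-- the polynomial identity -/
lemma poly_id (k : ℕ) (x : ℂ) :
    (∑ j ∈ range k, (j : ℂ) * x ^ j) * (1 - x) ^ 2
      = x * (1 - x ^ k) - k * x ^ k * (1 - x) := by
  induction k with
  | zero => simp
  | succ n ih =>
    rw [Finset.sum_range_succ, add_mul, ih]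
    push_cast
    ring

lemma one_sub_ne_zero {x : ℂ} (hx : ‖x‖ < 1) : 1 - x ≠ 0 := by
  intro h
  have : x = 1 := by linear_combination -h
  rw [this] at hx; simp at hx

lemma key_alg {k : ℕ} (hk : 2 ≤ k) {x : ℂ} (hx : ‖x‖ < 1) :
    ∑ j ∈ range k, (j : ℂ) * x ^ j
      = (x / (1 - x) - k * x ^ k / (1 - x ^ k)) * ∑ j ∈ range k, x ^ j := by
  have hxk : ‖x ^ k‖ < 1 := by
    rw [norm_pow]
    exact pow_lt_one₀ (norm_nonneg x) hx (by omega)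
  have h1 : (1 : ℂ) - x ≠ 0 := one_sub_ne_zero hx
  have h2 : (1 : ℂ) - x ^ k ≠ 0 := one_sub_ne_zero hxk
  have hx1 : x ≠ 1 := fun h => h1 (by rw [h]; ring)
  have hB : (∑ j ∈ range k, x ^ j) * (1 - x) = 1 - x ^ k := by
    have := geom_sum_mul x k
    linear_combination -this
  have hpoly := poly_id k x
  rw [div_sub_div _ _ h1 h2, div_mul_eq_mul_div, eq_comm, div_eq_iff (mul_ne_zero h1 h2)]
  linear_combination -(∑ j ∈ range k, x ^ j) * hpoly +
    (∑ j ∈ range k, (j : ℂ) * x ^ j) * (1 - x) * hB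


lemma toMultiset_sum_eq (f : ℕ →₀ ℕ) : (Finsupp.toMultiset f).sum = wgt f := by
  classical
  induction f using Finsupp.induction with
  | zero => simp [wgt]
  | single_add a b f ha hb ih =>
    rw [Finsupp.toMultiset_add, Multiset.sum_add, ih, wgt_add, Finsupp.toMultiset_single,
      wgt_single]
    congr 1
    rw [Multiset.nsmul_singleton, Multiset.sum_replicate, smul_eq_mul, mul_comm]

lemma cnt_eq_card (t r : ℕ) (f : ℕ →₀ ℕ) :
    Multiset.card ((Finsupp.toMultiset f).filter (fun j => j % t = r % t)) = cnt t r f := by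
  classical
  rw [← Multiset.toFinset_sum_count_eq]
  rw [cnt]
  have hset : ((Finsupp.toMultiset f).filter (fun j => j % t = r % t)).toFinset
      = f.support.filter (fun j => j % t = r % t) := by
    ext a
    simp only [Multiset.mem_toFinset, Multiset.mem_filter, Finset.mem_filter,
      Finsupp.mem_toMultiset]
  rw [hset]
  refine Finset.sum_congr rfl fun a ha => ?_
  rw [Multiset.count_filter_of_pos (p := fun j => j % t = r % t) (Finset.mem_filter.mp ha).2,
    Finsupp.count_toMultiset]

lemma finite_fiber (k n : ℕ) : Finite {g : ↥(Reg k Pos) // wgt g.1 = n} := by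
  haveI : Finite ↥{g : ↥(Reg k Pos) | wgt g.1 ≤ n} := (finite_wle k n).to_subtype
  exact Finite.of_injective
    (fun g => (⟨g.1, le_of_eq g.2⟩ : ↥{g : ↥(Reg k Pos) | wgt g.1 ≤ n}))
    (fun a b h => Subtype.ext (by simpa using h))

lemma dk_eq_sum {k : ℕ} (t r : ℕ) (hk : 2 ≤ k) (n : ℕ)
    [Fintype {g : ↥(Reg k Pos) // wgt g.1 = n}] :
    Dk k r t n = ∑ g : {g : ↥(Reg k Pos) // wgt g.1 = n}, cnt t r g.1.1 := by
  classical
  rw [Dk]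
  refine Finset.sum_bij'
    (i := fun p hp => (⟨⟨p.parts.toFinsupp, ?reg⟩, ?wgtn⟩ :
      {g : ↥(Reg k Pos) // wgt g.1 = n}))
    (j := fun g _ => (⟨Finsupp.toMultiset g.1.1,
      fun hi => g.1.2.2.2 _ ((Finsupp.mem_toMultiset _ _).mp hi),
      by rw [toMultiset_sum_eq]; exact g.2⟩ : Nat.Partition n))
    ?_ ?_ ?_ ?_ ?_
  case reg =>
    have hreg := (Finset.mem_filter.mp hp).2
    refine ⟨fun i => ?_, ?_, fun i hi => ?_⟩
    · by_cases hmem : i ∈ p.parts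
      · rw [Multiset.toFinsupp_apply]
        exact hreg i hmem
      · rw [Multiset.toFinsupp_apply, Multiset.count_eq_zero.mpr hmem]
        omega
    · rw [Multiset.toFinsupp_apply, Multiset.count_eq_zero]
      intro h0
      exact absurd (p.parts_pos h0) (lt_irrefl 0)
    · rw [Multiset.toFinsupp_support, Multiset.mem_toFinset] at hi
      exact p.parts_pos hi
  case wgtn =>
    have h1 : Finsupp.toMultiset (p.parts.toFinsupp) = p.parts :=
      Multiset.toFinsupp_toMultiset p.parts
    have h2 := toMultiset_sum_eq (p.parts.toFinsupp)
    rw [h1] at h2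
    rw [← h2]
    exact p.parts_sum
  · intro p hp
    exact Finset.mem_univ _
  · intro g _
    rw [Finset.mem_filter]
    refine ⟨Finset.mem_univ _, fun i hi => ?_⟩
    rw [Finsupp.count_toMultiset]
    exact g.1.2.1 i
  · intro p hp
    apply Nat.Partition.ext
    exact Multiset.toFinsupp_toMultiset p.parts
  · intro g _
    apply Subtype.ext
    apply Subtype.ext
    exact Finsupp.toMultiset_toFinsupp g.1.1
  · intro p hp
    have h := cnt_eq_card t r (p.parts.toFinsupp)
    rw [Multiset.toFinsupp_toMultiset] at h
    exact h

lemma dk_tsum {𝕜 : Type*} [Semiring 𝕜] [TopologicalSpace 𝕜] [T2Space 𝕜]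
    {k : ℕ} (t r : ℕ) (hk : 2 ≤ k) (n : ℕ) :
    ∑' g : {g : ↥(Reg k Pos) // wgt g.1 = n}, ((cnt t r g.1.1 : 𝕜)) = (Dk k r t n : 𝕜) := by
  haveI := finite_fiber k n
  haveI := Fintype.ofFinite {g : ↥(Reg k Pos) // wgt g.1 = n}
  rw [tsum_fintype, dk_eq_sum t r hk n, Nat.cast_sum]

lemma cnt_tsum {𝕜 : Type*} [Semiring 𝕜] [TopologicalSpace 𝕜] [T2Space 𝕜] (t r : ℕ)
    (f : ℕ →₀ ℕ) (hf0 : ∀ i ∈ f.support, 0 < i) :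
    ∑' m : {m : ℕ // 1 ≤ m ∧ m % t = r % t}, ((f m.1 : 𝕜)) = (cnt t r f : 𝕜) := by
  classical
  set s : Finset {m : ℕ // 1 ≤ m ∧ m % t = r % t} :=
    (f.support.filter (fun i => i % t = r % t)).attach.image
      (fun i => ⟨i.1, by
        have h := Finset.mem_filter.mp i.2
        exact ⟨hf0 i.1 h.1, h.2⟩⟩) with hs
  have hmem : ∀ m : {m : ℕ // 1 ≤ m ∧ m % t = r % t},
      m ∈ s ↔ m.1 ∈ f.support.filter (fun i => i % t = r % t) := by
    intro m
    rw [hs]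
    constructor
    · intro hm
      obtain ⟨i, _, hi⟩ := Finset.mem_image.mp hm
      rw [← hi]
      exact i.2
    · intro hm
      exact Finset.mem_image.mpr ⟨⟨m.1, hm⟩, Finset.mem_attach _ _, Subtype.ext rfl⟩
  rw [tsum_eq_sum (s := s) ?_]
  · rw [hs, Finset.sum_image (fun i _ j _ h => Subtype.ext (by
      simpa using congrArg Subtype.val h))]
    rw [Finset.sum_attach (f.support.filter (fun i => i % t = r % t))
      (fun i => ((f i : 𝕜)))]
    rw [cnt, Nat.cast_sum]
  · intro m hm
    have : f m.1 = 0 := by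
      by_contra h
      exact hm ((hmem m).mpr (Finset.mem_filter.mpr
        ⟨Finsupp.mem_support_iff.mpr h, m.2.2⟩))
    rw [this, Nat.cast_zero]

lemma Mval {k t r : ℕ} (hk : 2 ≤ k) {q : ℂ} (hq : ‖q‖ < 1)
    (m : {m : ℕ // 1 ≤ m ∧ m % t = r % t}) :
    ∑' g : ↥(Reg k Pos), ((g.1 m.1 : ℂ)) * q ^ wgt g.1
      = (q ^ (m : ℕ) / (1 - q ^ (m : ℕ)) -
          (k : ℂ) * q ^ (k * (m : ℕ)) / (1 - q ^ (k * (m : ℕ)))) * TT k q Pos := by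
  have hm : 0 < m.1 := m.2.1
  have hmPos : m.1 ∈ Pos := hm
  have hPos : Pos = insert m.1 (Pos \ {m.1}) := by
    rw [Set.insert_diff_singleton, Set.insert_eq_self.mpr hmPos]
  have hsub : Pos \ {m.1} ⊆ Pos := Set.diff_subset
  have hnot : m.1 ∉ Pos \ {m.1} := fun h => h.2 rfl
  have hins : insert m.1 (Pos \ {m.1}) ⊆ Pos := by rw [← hPos]
  have hM : ∑' g : ↥(Reg k Pos), ((g.1 m.1 : ℂ)) * q ^ wgt g.1
      = (∑ j ∈ range k, (j : ℂ) * q ^ (m.1 * j)) * TT k q (Pos \ {m.1}) := by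
    conv_lhs => rw [hPos]
    exact tsum_insert hq hm hsub hnot (fun j => ((j : ℂ)))
      (hc_id hq hins m.1 hm)
  have hT : TT k q Pos = (∑ j ∈ range k, q ^ (m.1 * j)) * TT k q (Pos \ {m.1}) := by
    conv_lhs => rw [hPos]
    exact TT_insert hq hm hsub hnot
  have hxm : ‖q ^ m.1‖ < 1 := by
    rw [norm_pow]
    exact pow_lt_one₀ (norm_nonneg q) hq (by omega)
  have halg := key_alg hk hxm
  have hpowj : ∀ j : ℕ, (q ^ m.1) ^ j = q ^ (m.1 * j) := fun j => by
    rw [← pow_mul]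
  have hpowk : (q ^ m.1) ^ k = q ^ (k * m.1) := by rw [← pow_mul, mul_comm]
  rw [hM, hT]
  rw [Finset.sum_congr rfl (fun j _ => by rw [← hpowj j]) , halg, hpowk]
  rw [Finset.sum_congr rfl (fun j _ => hpowj j)]
  ring

lemma summable_gm {k t r : ℕ} (hk : 2 ≤ k) {q : ℂ} (hq : ‖q‖ < 1) :
    Summable (fun m : {m : ℕ // 1 ≤ m ∧ m % t = r % t} =>
      ‖q ^ (m : ℕ) / (1 - q ^ (m : ℕ)) -
        (k : ℂ) * q ^ (k * (m : ℕ)) / (1 - q ^ (k * (m : ℕ)))‖) := by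
  have hx0 : (0:ℝ) ≤ ‖q‖ := norm_nonneg q
  have hfrac : ∀ e : ℕ, 1 ≤ e → ‖q ^ e / (1 - q ^ e)‖ ≤ ‖q‖ ^ e / (1 - ‖q‖) := by
    intro e he
    have h1 : ‖q ^ e‖ ≤ ‖q‖ := by
      rw [norm_pow]
      exact pow_le_of_le_one hx0 hq.le (by omega)
    have h2 : 1 - ‖q‖ ≤ ‖1 - q ^ e‖ := by
      have := norm_sub_norm_le (1 : ℂ) (q ^ e)
      rw [norm_one] at this
      linarith
    rw [norm_div, norm_pow]
    exact div_le_div_of_nonneg_left (by positivity) (by linarith) h2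
  have hbase : Summable (fun m : {m : ℕ // 1 ≤ m ∧ m % t = r % t} => ‖q‖ ^ m.1) :=
    (summable_geometric_of_lt_one hx0 hq).comp_injective Subtype.val_injective
  refine Summable.of_nonneg_of_le (fun m => norm_nonneg _) (fun m => ?_)
    (((hbase.div_const (1 - ‖q‖)).mul_left ((1 : ℝ) + k)))
  have hm1 : 1 ≤ m.1 := m.2.1
  have hkm1 : 1 ≤ k * m.1 := Nat.one_le_iff_ne_zero.mpr (by positivity)
  have ha := hfrac m.1 hm1
  have hb := hfrac (k * m.1) hkm1
  have hxkm : ‖q‖ ^ (k * m.1) ≤ ‖q‖ ^ m.1 :=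
    pow_le_pow_of_le_one hx0 hq.le (Nat.le_mul_of_pos_left m.1 (by omega))
  have hrw : (k : ℂ) * q ^ (k * (m : ℕ)) / (1 - q ^ (k * (m : ℕ)))
      = (k : ℂ) * (q ^ (k * (m : ℕ)) / (1 - q ^ (k * (m : ℕ)))) := by
    rw [mul_div_assoc]
  calc ‖q ^ (m : ℕ) / (1 - q ^ (m : ℕ)) -
        (k : ℂ) * q ^ (k * (m : ℕ)) / (1 - q ^ (k * (m : ℕ)))‖
      ≤ ‖q ^ (m : ℕ) / (1 - q ^ (m : ℕ))‖ +
        ‖(k : ℂ) * q ^ (k * (m : ℕ)) / (1 - q ^ (k * (m : ℕ)))‖ := norm_sub_le _ _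
    _ ≤ ‖q‖ ^ m.1 / (1 - ‖q‖) + (k : ℝ) * (‖q‖ ^ m.1 / (1 - ‖q‖)) := by
        have hc : ‖(k : ℂ) * q ^ (k * (m : ℕ)) / (1 - q ^ (k * (m : ℕ)))‖
            = (k : ℝ) * ‖q ^ (k * (m : ℕ)) / (1 - q ^ (k * (m : ℕ)))‖ := by
          rw [hrw, norm_mul, Complex.norm_natCast]
        rw [hc]
        have hd : (k : ℝ) * ‖q ^ (k * (m : ℕ)) / (1 - q ^ (k * (m : ℕ)))‖
            ≤ (k : ℝ) * (‖q‖ ^ m.1 / (1 - ‖q‖)) := by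
          apply mul_le_mul_of_nonneg_left _ (Nat.cast_nonneg k)
          refine hb.trans ?_
          exact (div_le_div_iff_of_pos_right (by linarith)).mpr hxkm
        exact add_le_add ha hd
    _ = ((1 : ℝ) + k) * (‖q‖ ^ m.1 / (1 - ‖q‖)) := by ring

lemma summable_row {𝕜 : Type*} [Semiring 𝕜] [TopologicalSpace 𝕜] (t r : ℕ) (f : ℕ →₀ ℕ) :
    Summable (fun m : {m : ℕ // 1 ≤ m ∧ m % t = r % t} => ((f m.1 : 𝕜))) := by
  classical
  apply summable_of_ne_finset_zero
    (s := f.support.subtype (fun m => 1 ≤ m ∧ m % t = r % t))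
  intro m hm
  rw [Finsupp.notMem_support_iff.mp (by simpa using hm), Nat.cast_zero]

end Stmt6Aux

open Stmt6Aux

set_option maxHeartbeats 4000000 in
theorem stmt6 (k t r : ℕ) (hk : 2 ≤ k) (ht : 2 ≤ t) (hr1 : 1 ≤ r) (hrt : r ≤ t)
    (q : ℂ) (hq : ‖q‖ < 1) :
    Summable (fun n : ℕ => ‖(Dk k r t n : ℂ) * q ^ n‖) ∧
    Summable (fun m : {m : ℕ // 1 ≤ m ∧ m % t = r % t} =>
      ‖q ^ (m : ℕ) / (1 - q ^ (m : ℕ)) -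
        (k : ℂ) * q ^ (k * (m : ℕ)) / (1 - q ^ (k * (m : ℕ)))‖) ∧
    ∑' n : ℕ, (Dk k r t n : ℂ) * q ^ n =
      xi k q *
        ∑' m : {m : ℕ // 1 ≤ m ∧ m % t = r % t},
          (q ^ (m : ℕ) / (1 - q ^ (m : ℕ)) -
            (k : ℂ) * q ^ (k * (m : ℕ)) / (1 - q ^ (k * (m : ℕ)))) := by
  classical
  have hx0 : (0:ℝ) ≤ ‖q‖ := norm_nonneg q
  -- summability of the master counted family, complex and real
  have hSc : Summable (fun g : ↥(Reg k Pos) => ((cnt t r g.1 : ℂ)) * q ^ wgt g.1) := by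
    refine summable_on (k := k) hq (subset_refl Pos)
      (F := fun f => ((cnt t r f : ℂ)) * q ^ wgt f) (fun f hf => ?_)
    rw [norm_mul, norm_pow, Complex.norm_natCast]
    have h1 : (cnt t r f : ℝ) ≤ (wgt f : ℝ) := Nat.cast_le.mpr (cnt_le_wgt t r hf)
    have h2 : (0:ℝ) ≤ ‖q‖ ^ wgt f := by positivity
    nlinarith
  have hSr : Summable (fun g : ↥(Reg k Pos) => ((cnt t r g.1 : ℝ)) * ‖q‖ ^ wgt g.1) := by
    refine summable_on (k := k) hq (subset_refl Pos)
      (F := fun f => ((cnt t r f : ℝ)) * ‖q‖ ^ wgt f) (fun f hf => ?_)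
    rw [Real.norm_eq_abs, abs_of_nonneg (by positivity)]
    have h1 : (cnt t r f : ℝ) ≤ (wgt f : ℝ) := Nat.cast_le.mpr (cnt_le_wgt t r hf)
    have h2 : (0:ℝ) ≤ ‖q‖ ^ wgt f := by positivity
    nlinarith
  set e := Equiv.sigmaFiberEquiv (fun g : ↥(Reg k Pos) => wgt g.1) with he
  -- claim 1
  have hsigr : Summable (fun σ : Σ n : ℕ, {g : ↥(Reg k Pos) // wgt g.1 = n} =>
      ((cnt t r σ.2.1.1 : ℝ)) * ‖q‖ ^ wgt σ.2.1.1) :=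
    (e.summable_iff
      (f := fun g : ↥(Reg k Pos) => ((cnt t r g.1 : ℝ)) * ‖q‖ ^ wgt g.1)).mpr hSr
  have hDn : Summable (fun n : ℕ => ∑' g : {g : ↥(Reg k Pos) // wgt g.1 = n},
      ((cnt t r g.1.1 : ℝ)) * ‖q‖ ^ wgt g.1.1) := hsigr.sigma
  have hinner : ∀ n : ℕ, ∑' g : {g : ↥(Reg k Pos) // wgt g.1 = n},
      ((cnt t r g.1.1 : ℝ)) * ‖q‖ ^ wgt g.1.1 = (Dk k r t n : ℝ) * ‖q‖ ^ n := by
    intro n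
    calc ∑' g : {g : ↥(Reg k Pos) // wgt g.1 = n}, ((cnt t r g.1.1 : ℝ)) * ‖q‖ ^ wgt g.1.1
        = ∑' g : {g : ↥(Reg k Pos) // wgt g.1 = n}, ((cnt t r g.1.1 : ℝ)) * ‖q‖ ^ n :=
          tsum_congr (fun g => by rw [g.2])
      _ = (∑' g : {g : ↥(Reg k Pos) // wgt g.1 = n}, ((cnt t r g.1.1 : ℝ))) * ‖q‖ ^ n :=
          tsum_mul_right
      _ = (Dk k r t n : ℝ) * ‖q‖ ^ n := by rw [dk_tsum t r hk n]
  have claim1 : Summable (fun n : ℕ => ‖(Dk k r t n : ℂ) * q ^ n‖) := by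
    refine Summable.of_nonneg_of_le (fun n => norm_nonneg _) (fun n => ?_) hDn
    rw [hinner n, norm_mul, norm_pow, Complex.norm_natCast]
  -- the complex grand sum
  have hSsigc : Summable (fun σ : Σ n : ℕ, {g : ↥(Reg k Pos) // wgt g.1 = n} =>
      ((cnt t r σ.2.1.1 : ℂ)) * q ^ wgt σ.2.1.1) :=
    (e.summable_iff
      (f := fun g : ↥(Reg k Pos) => ((cnt t r g.1 : ℂ)) * q ^ wgt g.1)).mpr hSc
  have hL : ∑' g : ↥(Reg k Pos), ((cnt t r g.1 : ℂ)) * q ^ wgt g.1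
      = ∑' n : ℕ, (Dk k r t n : ℂ) * q ^ n := by
    have hstep : (∑' c : (Σ n : ℕ, {g : ↥(Reg k Pos) // wgt g.1 = n}),
        ((cnt t r (e c).1 : ℂ)) * q ^ wgt (e c).1)
        = ∑' n : ℕ, ∑' g : {g : ↥(Reg k Pos) // wgt g.1 = n},
            ((cnt t r g.1.1 : ℂ)) * q ^ wgt g.1.1 := hSsigc.tsum_sigma
    rw [← e.tsum_eq (fun g : ↥(Reg k Pos) => ((cnt t r g.1 : ℂ)) * q ^ wgt g.1), hstep]
    refine tsum_congr (fun n => ?_)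
    calc ∑' g : {g : ↥(Reg k Pos) // wgt g.1 = n}, ((cnt t r g.1.1 : ℂ)) * q ^ wgt g.1.1
        = ∑' g : {g : ↥(Reg k Pos) // wgt g.1 = n}, ((cnt t r g.1.1 : ℂ)) * q ^ n :=
          tsum_congr (fun g => by rw [g.2])
      _ = (∑' g : {g : ↥(Reg k Pos) // wgt g.1 = n}, ((cnt t r g.1.1 : ℂ))) * q ^ n :=
          tsum_mul_right
      _ = (Dk k r t n : ℂ) * q ^ n := by rw [dk_tsum t r hk n]
  -- Fubini
  have hsupp_pos : ∀ g : ↥(Reg k Pos), ∀ i ∈ g.1.support, 0 < i :=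
    fun g i hi => g.2.2.2 i hi
  have hstep1 : ∑' g : ↥(Reg k Pos), ((cnt t r g.1 : ℂ)) * q ^ wgt g.1
      = ∑' g : ↥(Reg k Pos), ∑' m : {m : ℕ // 1 ≤ m ∧ m % t = r % t},
          ((g.1 m.1 : ℂ)) * q ^ wgt g.1 := by
    refine tsum_congr (fun g => ?_)
    rw [tsum_mul_right, cnt_tsum t r g.1 (hsupp_pos g)]
  have hrow : ∀ g : ↥(Reg k Pos), Summable (fun m : {m : ℕ // 1 ≤ m ∧ m % t = r % t} =>
      ((g.1 m.1 : ℂ)) * q ^ wgt g.1) :=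
    fun g => (summable_row t r g.1).mul_right _
  have hcol : ∀ m : {m : ℕ // 1 ≤ m ∧ m % t = r % t},
      Summable (fun g : ↥(Reg k Pos) => ((g.1 m.1 : ℂ)) * q ^ wgt g.1) :=
    fun m => hc_id hq (subset_refl Pos) m.1 m.2.1
  have hN : Summable (fun p : ↥(Reg k Pos) × {m : ℕ // 1 ≤ m ∧ m % t = r % t} =>
      ((p.1.1 p.2.1 : ℝ)) * ‖q‖ ^ wgt p.1.1) := by
    refine (summable_prod_of_nonneg (fun p => by positivity)).mpr ⟨?_, ?_⟩
    · intro g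
      show Summable (fun m : {m : ℕ // 1 ≤ m ∧ m % t = r % t} =>
        ((g.1 m.1 : ℝ)) * ‖q‖ ^ wgt g.1)
      exact (summable_row (𝕜 := ℝ) t r g.1).mul_right _
    · refine hSr.congr (fun g => ?_)
      show (↑(cnt t r g.1) : ℝ) * ‖q‖ ^ wgt g.1
          = ∑' m : {m : ℕ // 1 ≤ m ∧ m % t = r % t}, ((g.1 m.1 : ℝ)) * ‖q‖ ^ wgt g.1
      rw [tsum_mul_right, cnt_tsum t r g.1 (hsupp_pos g)]
  have huncurry : Summable (Function.uncurry
      (fun (g : ↥(Reg k Pos)) (m : {m : ℕ // 1 ≤ m ∧ m % t = r % t}) =>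
        ((g.1 m.1 : ℂ)) * q ^ wgt g.1)) := by
    apply Summable.of_norm
    refine hN.congr (fun p => ?_)
    show ((p.1.1 p.2.1 : ℝ)) * ‖q‖ ^ wgt p.1.1 = ‖((p.1.1 p.2.1 : ℂ)) * q ^ wgt p.1.1‖
    rw [norm_mul, norm_pow, Complex.norm_natCast]
  have hswap : ∑' g : ↥(Reg k Pos), ∑' m : {m : ℕ // 1 ≤ m ∧ m % t = r % t},
        ((g.1 m.1 : ℂ)) * q ^ wgt g.1
      = ∑' m : {m : ℕ // 1 ≤ m ∧ m % t = r % t}, ∑' g : ↥(Reg k Pos),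
        ((g.1 m.1 : ℂ)) * q ^ wgt g.1 :=
    (huncurry.tsum_comm' hrow hcol).symm
  refine ⟨claim1, summable_gm hk hq, ?_⟩
  calc ∑' n : ℕ, (Dk k r t n : ℂ) * q ^ n
      = ∑' g : ↥(Reg k Pos), ((cnt t r g.1 : ℂ)) * q ^ wgt g.1 := hL.symm
    _ = ∑' g : ↥(Reg k Pos), ∑' m : {m : ℕ // 1 ≤ m ∧ m % t = r % t},
          ((g.1 m.1 : ℂ)) * q ^ wgt g.1 := hstep1
    _ = ∑' m : {m : ℕ // 1 ≤ m ∧ m % t = r % t}, ∑' g : ↥(Reg k Pos),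
          ((g.1 m.1 : ℂ)) * q ^ wgt g.1 := hswap
    _ = ∑' m : {m : ℕ // 1 ≤ m ∧ m % t = r % t},
          (q ^ (m : ℕ) / (1 - q ^ (m : ℕ)) -
            (k : ℂ) * q ^ (k * (m : ℕ)) / (1 - q ^ (k * (m : ℕ)))) * TT k q Pos :=
        tsum_congr (fun m => Mval hk hq m)
    _ = (∑' m : {m : ℕ // 1 ≤ m ∧ m % t = r % t},
          (q ^ (m : ℕ) / (1 - q ^ (m : ℕ)) -
            (k : ℂ) * q ^ (k * (m : ℕ)) / (1 - q ^ (k * (m : ℕ))))) * TT k q Pos :=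
        tsum_mul_right
    _ = xi k q * ∑' m : {m : ℕ // 1 ≤ m ∧ m % t = r % t},
          (q ^ (m : ℕ) / (1 - q ^ (m : ℕ)) -
            (k : ℂ) * q ^ (k * (m : ℕ)) / (1 - q ^ (k * (m : ℕ)))) := by
        rw [xi_eq_TT hk hq, mul_comm]
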